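/- In the labeled cons-free system, if s is B-safe and s →*_{R_lab} t with t a data term, then there is a semi-outermost reduction from s to t. -/

import Mathlib

/-! # Applicative term rewriting systems (ATRSs) -/

/-- Simple types over a countable set of sorts. -/
inductive Ty where
  | base : ℕ → Ty
  | arrow : Ty → Ty → Ty

/-- Type order: sorts have order 0, `σ ⇒ τ` has order `max (order σ + 1) (order τ)`. -/
def Ty.order : Ty → ℕ
  | .base _ => 0
  | .arrow σ τ => max (σ.order + 1) τ.order

/-- Applicative terms over a set `α` of function symbols, with variables `ℕ`. -/
inductive Tm (α : Type) where
  | sym : α → Tm α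
  | var : ℕ → Tm α
  | app : Tm α → Tm α → Tm α

mutual
  /-- Strict subterm: `t` is a strict subterm of `s₁ s₂` if it is a strict
  subterm of `s₁` or a subterm of `s₂` (heads of applications are not subterms). -/
  inductive StrSubtm {α : Type} : Tm α → Tm α → Prop where
    | left {t s u : Tm α} : StrSubtm t s → StrSubtm t (Tm.app s u)
    | right {t s u : Tm α} : Subtm t u → StrSubtm t (Tm.app s u)
  /-- Subterm: `t ⊴ s` iff `t = s` or `t` is a strict subterm of `s`. -/
  inductive Subtm {α : Type} : Tm α → Tm α → Prop where
    | refl (s : Tm α) : Subtm s s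
    | strict {t s : Tm α} : StrSubtm t s → Subtm t s
end

/-- A signature: which symbols are constructors, their types, and variable types. -/
structure Sig (α : Type) where
  Cons : α → Prop
  typeOf : α → Ty
  varTy : ℕ → Ty

/-- Typing judgement for applicative terms. -/
inductive HasTy {α : Type} (S : Sig α) : Tm α → Ty → Prop where
  | sym (f : α) : HasTy S (.sym f) (S.typeOf f)
  | var (x : ℕ) : HasTy S (.var x) (S.varTy x)
  | app {s t : Tm α} {σ τ : Ty} :
      HasTy S s (.arrow σ τ) → HasTy S t σ → HasTy S (.app s t) τ

mutual
  /-- Patterns: a variable, or a constructor fully applied (to base type) to patterns. -/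
  inductive Pat {α : Type} (S : Sig α) : Tm α → Prop where
    | var (x : ℕ) : Pat S (.var x)
    | cons {s : Tm α} : PatSpine S s → (∃ i, HasTy S s (.base i)) → Pat S s
  /-- A constructor applied to a (possibly incomplete) list of patterns. -/
  inductive PatSpine {α : Type} (S : Sig α) : Tm α → Prop where
    | head {f : α} : S.Cons f → PatSpine S (.sym f)
    | app {s t : Tm α} : PatSpine S s → Pat S t → PatSpine S (.app s t)
end

/-- Ground terms: terms without variables. -/
def Tm.ground {α : Type} : Tm α → Prop
  | .sym _ => True
  | .var _ => False
  | .app s t => s.ground ∧ t.ground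

/-- Data terms: ground patterns. -/
def IsData {α : Type} (S : Sig α) (s : Tm α) : Prop := Pat S s ∧ s.ground

/-- The set of variables of a term. -/
def Tm.vars {α : Type} : Tm α → Set ℕ
  | .sym _ => ∅
  | .var x => {x}
  | .app s t => s.vars ∪ t.vars

/-- Number of occurrences of variable `x` in a term. -/
def Tm.count {α : Type} (x : ℕ) : Tm α → ℕ
  | .sym _ => 0
  | .var y => if y = x then 1 else 0
  | .app s t => Tm.count x s + Tm.count x t

/-- Applying a substitution to a term. -/
def subst {α : Type} (γ : ℕ → Tm α) : Tm α → Tm α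
  | .sym f => .sym f
  | .var x => γ x
  | .app s t => .app (subst γ s) (subst γ t)

/-- A rewrite rule. -/
structure Rule (α : Type) where
  lhs : Tm α
  rhs : Tm α

/-- Left-hand side shape of a constructor rule:
a defined symbol applied to patterns. -/
inductive LhsSpine {α : Type} (S : Sig α) : Tm α → Prop where
  | head {f : α} : ¬ S.Cons f → LhsSpine S (.sym f)
  | app {s t : Tm α} : LhsSpine S s → Pat S t → LhsSpine S (.app s t)

/-- The head symbol of a term, if any. -/
def Tm.headSym {α : Type} : Tm α → Option α
  | .sym f => some f
  | .var _ => none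
  | .app s _ => s.headSym

/-- `t` has the form `c t₁ ⋯ t_m` with `c` a constructor. -/
def ConsHead {α : Type} (S : Sig α) (t : Tm α) : Prop :=
  ∃ f, t.headSym = some f ∧ S.Cons f

/-- A rule is cons-free if every constructor-headed subterm of the right-hand side
is a data term or a (strict) subterm of the left-hand side. -/
def ConsFreeRule {α : Type} (S : Sig α) (ρ : Rule α) : Prop :=
  ∀ t, Subtm t ρ.rhs → ConsHead S t → (IsData S t ∨ StrSubtm t ρ.lhs)

/-- A left-linear cons-free constructor rule (with well-typed sides of equal type,
and variables of the right-hand side occurring on the left). -/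
def GoodRule {α : Type} (S : Sig α) (ρ : Rule α) : Prop :=
  LhsSpine S ρ.lhs ∧
  (∀ x, Tm.count x ρ.lhs ≤ 1) ∧
  ρ.rhs.vars ⊆ ρ.lhs.vars ∧
  (∃ σ, HasTy S ρ.lhs σ ∧ HasTy S ρ.rhs σ) ∧
  ConsFreeRule S ρ

/-- One-step rewriting: closure of rule instances under application contexts. -/
inductive Rew {α : Type} (R : Set (Rule α)) : Tm α → Tm α → Prop where
  | root {ρ : Rule α} {γ : ℕ → Tm α} :
      ρ ∈ R → Rew R (subst γ ρ.lhs) (subst γ ρ.rhs)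
  | appL {s s' t : Tm α} : Rew R s s' → Rew R (.app s t) (.app s' t)
  | appR {s t t' : Tm α} : Rew R t t' → Rew R (.app s t) (.app s t')

/-- `s` is `B`-safe: every constructor-headed subterm of `s` lies in `B`. -/
def BSafe {α : Type} (S : Sig α) (B : Set (Tm α)) (s : Tm α) : Prop :=
  ∀ t, Subtm t s → ConsHead S t → t ∈ B

/-- `B` is a suitable set of data terms: it consists of data terms, is closed
under subterms, and contains all data subterms of right-hand sides of rules. -/
def GoodB {α : Type} (S : Sig α) (R : Set (Rule α)) (B : Set (Tm α)) : Prop :=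
  (∀ t ∈ B, IsData S t) ∧
  (∀ t ∈ B, ∀ u, Subtm u t → u ∈ B) ∧
  (∀ ρ ∈ R, ∀ t, Subtm t ρ.rhs → IsData S t → t ∈ B)

/-- Spine of a basic term: a defined symbol applied to data terms. -/
inductive BasicSpine {α : Type} (S : Sig α) : Tm α → Prop where
  | head {f : α} : ¬ S.Cons f → BasicSpine S (.sym f)
  | app {s t : Tm α} : BasicSpine S s → IsData S t → BasicSpine S (.app s t)

/-- Basic terms: a defined symbol applied to data terms, of base type. -/
def Basic {α : Type} (S : Sig α) (s : Tm α) : Prop :=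
  BasicSpine S s ∧ ∃ i, HasTy S s (.base i)

/-- The set `B_s`: data terms occurring in `s` or in a right-hand side of a rule. -/
def Bset {α : Type} (S : Sig α) (R : Set (Rule α)) (s : Tm α) : Set (Tm α) :=
  { t | IsData S t ∧ (Subtm t s ∨ ∃ ρ ∈ R, Subtm t ρ.rhs) }
/-! # Labeled systems -/

open Classical in
/-- `labelTm S i s` replaces every defined symbol `f` of `s` by its `i`-labeled
copy `(f, i)`; constructors are unaffected (they get the fixed label `0`). -/
noncomputable def labelTm {α : Type} (S : Sig α) (i : ℕ) : Tm α → Tm (α × ℕ)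
  | .sym f => .sym (f, if S.Cons f then 0 else i)
  | .var x => .var x
  | .app s t => .app (labelTm S i s) (labelTm S i t)

/-- Erasing labels. -/
def eraseTm {α : Type} : Tm (α × ℕ) → Tm α
  | .sym p => .sym p.1
  | .var x => .var x
  | .app s t => .app (eraseTm s) (eraseTm t)

/-- The labeled signature: each labeled copy keeps the status and type of the
original symbol. -/
def SigLab {α : Type} (S : Sig α) : Sig (α × ℕ) :=
  { Cons := fun p => S.Cons p.1
    typeOf := fun p => S.typeOf p.1
    varTy := S.varTy }

/-- The labeled rules: `f_{i+1} → f_i` for every defined symbol `f`, and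
`f_{i+1} ℓ₁ ⋯ ℓ_k → label_i(r)` for every rule `f ℓ₁ ⋯ ℓ_k → r` of `R`. -/
def RLab {α : Type} (S : Sig α) (R : Set (Rule α)) : Set (Rule (α × ℕ)) :=
  { ρ' | ∃ f i, ¬ S.Cons f ∧ ρ' = ⟨.sym (f, i + 1), .sym (f, i)⟩ } ∪
  { ρ' | ∃ ρ ∈ R, ∃ i, ρ' = ⟨labelTm S (i + 1) ρ.lhs, labelTm S i ρ.rhs⟩ }

/-- A symbol applied to a list of arguments. -/
def mkApp {α : Type} (h : Tm α) (l : List (Tm α)) : Tm α := l.foldl Tm.app h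

/-- All argument types of a type are of order 0 (base types). -/
def ConsArgsBase : Ty → Prop
  | .base _ => True
  | .arrow σ τ => σ.order = 0 ∧ ConsArgsBase τ

/-- Termination of a term: no infinite reduction starts from it. -/
def TerminatingTm {α : Type} (R : Set (Rule α)) (s : Tm α) : Prop :=
  ¬ ∃ seq : ℕ → Tm α, seq 0 = s ∧ ∀ n, Rew R (seq n) (seq (n + 1))

/-- The computability predicate, by recursion on types: a base-type term is
computable iff it is terminating; `s : σ ⇒ τ` is computable iff `s t` is
computable for every computable `t : σ`. -/
def Comp {α : Type} (S : Sig α) (R : Set (Rule α)) : Ty → Tm α → Prop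
  | .base _, s => TerminatingTm R s
  | .arrow σ τ, s => ∀ t, HasTy S t σ → Comp S R σ t → Comp S R τ (.app s t)

/-- Existence of a semi-outermost reduction from `s` to `t`. -/
inductive SemiOut {α : Type} (R : Set (Rule α)) : Tm α → Tm α → Prop where
  | refl (s : Tm α) : SemiOut R s s
  | step {f : α} {ss ls : List (Tm α)} {ρ : Rule α} {γ : ℕ → Tm α} {t : Tm α}
      (hρ : ρ ∈ R) (hl : ρ.lhs = mkApp (Tm.sym f) ls)
      (hle : ls.length ≤ ss.length)
      (hargs : ∀ j (hj : j < ls.length),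
        SemiOut R (ss[j]'(lt_of_lt_of_le hj hle)) (subst γ (ls[j]'hj)))
      (hvar : ∀ j (hj : j < ls.length), (∃ x, ls[j]'hj = Tm.var x) →
        ss[j]'(lt_of_lt_of_le hj hle) = subst γ (ls[j]'hj))
      (hrest : SemiOut R (mkApp (subst γ ρ.rhs) (ss.drop ls.length)) t) :
      SemiOut R (mkApp (Tm.sym f) ss) t
section Basics
variable {β : Type}

/-- Head of the application spine. -/
def Tm.headT : Tm β → Tm β
  | .app s _ => Tm.headT s
  | t => t

/-- Arguments of the application spine. -/
def Tm.argsT : Tm β → List (Tm β)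
  | .app s t => Tm.argsT s ++ [t]
  | _ => []

theorem mkApp_nil (h : Tm β) : mkApp h [] = h := rfl

theorem mkApp_cons (h : Tm β) (a : Tm β) (l : List (Tm β)) :
    mkApp h (a :: l) = mkApp (.app h a) l := rfl

theorem mkApp_append (h : Tm β) (l₁ l₂ : List (Tm β)) :
    mkApp h (l₁ ++ l₂) = mkApp (mkApp h l₁) l₂ := by
  simp [mkApp, List.foldl_append]

theorem mkApp_concat (h : Tm β) (l : List (Tm β)) (a : Tm β) :
    mkApp h (l ++ [a]) = .app (mkApp h l) a := by
  simp [mkApp_append, mkApp]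

theorem headT_mkApp (h : Tm β) (l : List (Tm β)) : (mkApp h l).headT = h.headT := by
  induction l generalizing h with
  | nil => rfl
  | cons a l ih => rw [mkApp_cons, ih]; rfl

theorem argsT_mkApp (h : Tm β) (l : List (Tm β)) : (mkApp h l).argsT = h.argsT ++ l := by
  induction l generalizing h with
  | nil => simp [mkApp_nil]
  | cons a l ih => rw [mkApp_cons, ih]; simp [Tm.argsT]

theorem mkApp_headT_argsT : ∀ t : Tm β, mkApp t.headT t.argsT = t := by
  intro t
  induction t with
  | sym f => rfl
  | var x => rfl
  | app s t ih _ => show mkApp s.headT (s.argsT ++ [t]) = _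
                    rw [mkApp_concat, ih]

theorem headT_sym_spine {t : Tm β} {f : β} (h : t.headT = .sym f) :
    t = mkApp (.sym f) t.argsT := by
  conv_lhs => rw [← mkApp_headT_argsT t]
  rw [h]

theorem spine_inj {f g : β} {l m : List (Tm β)} (h : mkApp (.sym f) l = mkApp (.sym g) m) :
    f = g ∧ l = m := by
  have h1 := congrArg Tm.headT h
  have h2 := congrArg Tm.argsT h
  rw [headT_mkApp, headT_mkApp] at h1
  rw [argsT_mkApp, argsT_mkApp] at h2
  simp [Tm.headT, Tm.argsT] at h1 h2
  exact ⟨h1, h2⟩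

theorem headSym_app (s t : Tm β) : (Tm.app s t).headSym = s.headSym := rfl

theorem headSym_mkApp (h : Tm β) (l : List (Tm β)) : (mkApp h l).headSym = h.headSym := by
  induction l generalizing h with
  | nil => rfl
  | cons a l ih => rw [mkApp_cons, ih]; rfl

theorem headSym_headT (t : Tm β) : t.headSym = t.headT.headSym := by
  induction t with
  | sym f => rfl
  | var x => rfl
  | app s t ih _ => exact ih

theorem headT_of_headSym {t : Tm β} {c : β} (h : t.headSym = some c) :
    t.headT = .sym c := by
  rw [headSym_headT] at h
  induction t with
  | sym f => simp [Tm.headT, Tm.headSym] at h ⊢; exact h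
  | var x => simp [Tm.headT, Tm.headSym] at h
  | app s t ih _ => exact ih h

theorem headT_cases (t : Tm β) : (∃ f, t.headT = .sym f) ∨ (∃ x, t.headT = .var x) := by
  induction t with
  | sym f => exact .inl ⟨f, rfl⟩
  | var x => exact .inr ⟨x, rfl⟩
  | app s t ih _ => exact ih

theorem subst_mkApp (γ : ℕ → Tm β) (h : Tm β) (l : List (Tm β)) :
    subst γ (mkApp h l) = mkApp (subst γ h) (l.map (subst γ)) := by
  induction l generalizing h with
  | nil => rfl
  | cons a l ih => rw [mkApp_cons, ih]; rfl

theorem ground_subst {t : Tm β} (h : t.ground) (γ : ℕ → Tm β) : subst γ t = t := by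
  induction t with
  | sym f => rfl
  | var x => exact absurd h (by simp [Tm.ground])
  | app s t ihs iht =>
    obtain ⟨h1, h2⟩ := h
    simp [subst, ihs h1, iht h2]

theorem count_pos_of_mem_vars {x : ℕ} : ∀ {t : Tm β}, x ∈ t.vars → 1 ≤ t.count x := by
  intro t
  induction t with
  | sym f => intro h; simp [Tm.vars] at h
  | var y => intro h; simp [Tm.vars] at h; simp [Tm.count, h]
  | app s t ihs iht =>
    intro h
    rcases h with h | h
    · have := ihs h; simp [Tm.count]; omega
    · have := iht h; simp [Tm.count]; omega

theorem subst_congr {γ₁ γ₂ : ℕ → Tm β} : ∀ {t : Tm β},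
    (∀ y ∈ t.vars, γ₁ y = γ₂ y) → subst γ₁ t = subst γ₂ t := by
  intro t
  induction t with
  | sym f => intro _; rfl
  | var y => intro h; exact h y (by simp [Tm.vars])
  | app s t ihs iht =>
    intro h
    simp only [subst]
    rw [ihs (fun y hy => h y (.inl hy)), iht (fun y hy => h y (.inr hy))]

theorem count_mkApp (x : ℕ) (h : Tm β) (l : List (Tm β)) :
    (mkApp h l).count x = h.count x + (l.map (Tm.count x)).sum := by
  induction l generalizing h with
  | nil => simp [mkApp_nil]
  | cons a l ih => rw [mkApp_cons, ih]; simp [Tm.count]; ring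

theorem mem_vars_mkApp {x : ℕ} {h : Tm β} {l : List (Tm β)} :
    x ∈ (mkApp h l).vars ↔ x ∈ h.vars ∨ ∃ a ∈ l, x ∈ a.vars := by
  induction l generalizing h with
  | nil => simp [mkApp_nil]
  | cons a l ih =>
    rw [mkApp_cons, ih]
    constructor
    · rintro (h | h)
      · rcases h with h | h
        · exact .inl h
        · exact .inr ⟨a, by simp, h⟩
      · obtain ⟨b, hb, hx⟩ := h; exact .inr ⟨b, by simp [hb], hx⟩
    · rintro (h | ⟨b, hb, hx⟩)
      · exact .inl (.inl h)
      · rcases List.mem_cons.mp hb with rfl | hb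
        · exact .inl (.inr hx)
        · exact .inr ⟨b, hb, hx⟩

end Basics
section Subterms
variable {β : Type}

theorem str_trans : ∀ (c : Tm β) {a b : Tm β}, Subtm a b → StrSubtm b c → StrSubtm a c := by
  intro c
  induction c with
  | sym f => intro a b _ h; cases h
  | var x => intro a b _ h; cases h
  | app s u ihs ihu =>
    intro a b hab hbc
    cases hbc with
    | left h => exact .left (ihs hab h)
    | right h =>
      refine .right ?_
      cases h with
      | refl => exact hab
      | strict h' => exact .strict (ihu hab h')

theorem subtm_trans {a b c : Tm β} (hab : Subtm a b) (hbc : Subtm b c) : Subtm a c := by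
  cases hbc with
  | refl => exact hab
  | strict h => exact .strict (str_trans _ hab h)

theorem subtm_sym_inv {f : β} {w : Tm β} (h : Subtm w (.sym f)) : w = .sym f := by
  cases h with
  | refl => rfl
  | strict h => cases h

theorem subtm_var_inv {x : ℕ} {w : Tm β} (h : Subtm w (.var x)) : w = .var x := by
  cases h with
  | refl => rfl
  | strict h => cases h

theorem sub_size : ∀ (b : Tm β) (a : Tm β),
    (StrSubtm a b → sizeOf a < sizeOf b) ∧ (Subtm a b → sizeOf a ≤ sizeOf b) := by
  intro b
  induction b with
  | sym f =>
    intro a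
    constructor
    · intro h; cases h
    · intro h; rw [subtm_sym_inv h]
  | var x =>
    intro a
    constructor
    · intro h; cases h
    · intro h; rw [subtm_var_inv h]
  | app s u ihs ihu =>
    intro a
    have hstr : StrSubtm a (.app s u) → sizeOf a < sizeOf (Tm.app s u) := by
      intro h
      cases h with
      | left h => have := (ihs a).1 h; simp; omega
      | right h => have := (ihu a).2 h; simp; omega
    exact ⟨hstr, fun h => by
      cases h with
      | refl => exact le_rfl
      | strict h => exact le_of_lt (hstr h)⟩

theorem strSub_irrefl {a : Tm β} (h : StrSubtm a a) : False := by
  have := (sub_size a a).1 h; omega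

theorem args_strSub : ∀ (l : List (Tm β)) (h : Tm β) (j : ℕ) (hj : j < l.length),
    StrSubtm (l[j]'hj) (mkApp h l) := by
  intro l
  induction l using List.reverseRecOn with
  | nil => intro _ _ hj; simp at hj
  | append_singleton l a ih =>
    intro h j hj
    rw [mkApp_concat]
    rcases lt_or_ge j l.length with hlt | hge
    · rw [List.getElem_append_left hlt]
      exact .left (ih h j hlt)
    · have hj' : j = l.length := by simp at hj; omega
      subst hj'
      have : (l ++ [a])[l.length]'hj = a := by simp
      rw [this]
      exact .right (.refl a)

theorem strSub_mkApp_inv : ∀ {l : List (Tm β)} {h w : Tm β},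
    StrSubtm w (mkApp h l) → StrSubtm w h ∨ ∃ a ∈ l, Subtm w a := by
  intro l
  induction l using List.reverseRecOn with
  | nil => intro h w hw; exact .inl hw
  | append_singleton l a ih =>
    intro h w hw
    rw [mkApp_concat] at hw
    cases hw with
    | left h' =>
      rcases ih h' with h'' | ⟨b, hb, hwb⟩
      · exact .inl h''
      · exact .inr ⟨b, by simp [hb], hwb⟩
    | right h' => exact .inr ⟨a, by simp, h'⟩

theorem str_subst (γ : ℕ → Tm β) : ∀ (r : Tm β) {w : Tm β},
    StrSubtm w r → StrSubtm (subst γ w) (subst γ r) := by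
  intro r
  induction r with
  | sym f => intro w h; cases h
  | var x => intro w h; cases h
  | app a b iha ihb =>
    intro w h
    cases h with
    | left h => exact .left (iha h)
    | right h =>
      refine .right ?_
      cases h with
      | refl => exact .refl _
      | strict h' => exact .strict (ihb h')

theorem headSym_subst {γ : ℕ → Tm β} : ∀ {w : Tm β} {c : β},
    w.headSym = some c → (subst γ w).headSym = some c := by
  intro w
  induction w with
  | sym f => intro c h; exact h
  | var x => intro c h; simp [Tm.headSym] at h
  | app s t ihs _ => intro c h; exact ihs h

/-- Decomposition of the subterms of a substituted term. -/
theorem sub_subst (γ : ℕ → Tm β) : ∀ (r : Tm β) {w : Tm β}, Subtm w (subst γ r) →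
    (∃ x, x ∈ r.vars ∧ Subtm w (γ x)) ∨
    (∃ w₀, Subtm w₀ r ∧ w = subst γ w₀ ∧ w₀.headSym.isSome) ∨
    (∃ y args, args ≠ [] ∧ y ∈ r.vars ∧ w = mkApp (γ y) (args.map (subst γ))) := by
  intro r
  induction r with
  | sym f =>
    intro w hw
    rw [subtm_sym_inv hw]
    exact .inr (.inl ⟨.sym f, .refl _, rfl, rfl⟩)
  | var x =>
    intro w hw
    exact .inl ⟨x, by simp [Tm.vars], hw⟩
  | app r₁ r₂ ih₁ ih₂ =>
    intro w hw
    cases hw with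
    | refl =>
      rcases headT_cases (Tm.app r₁ r₂) with ⟨f, hf⟩ | ⟨y, hy⟩
      · refine .inr (.inl ⟨.app r₁ r₂, .refl _, rfl, ?_⟩)
        rw [headSym_headT, hf]; rfl
      · refine .inr (.inr ⟨y, (Tm.app r₁ r₂).argsT, ?_, ?_, ?_⟩)
        · simp [Tm.argsT]
        · have h1 : y ∈ (Tm.app r₁ r₂).headT.vars := by rw [hy]; simp [Tm.vars]
          have h2 : y ∈ (mkApp (Tm.app r₁ r₂).headT (Tm.app r₁ r₂).argsT).vars :=
            mem_vars_mkApp.mpr (.inl h1)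
          rwa [mkApp_headT_argsT] at h2
        · show subst γ (Tm.app r₁ r₂) = _
          conv_lhs => rw [← mkApp_headT_argsT (Tm.app r₁ r₂)]
          rw [subst_mkApp, hy]
          rfl
    | strict hstr =>
      cases hstr with
      | left h =>
        rcases ih₁ (.strict h) with ⟨x, hx, hw⟩ | ⟨w₀, hsub, rfl, hhead⟩ | ⟨y, args, hne, hy, hw⟩
        · exact .inl ⟨x, .inl hx, hw⟩
        · cases hsub with
          | refl => exact absurd h strSub_irrefl
          | strict h' => exact .inr (.inl ⟨w₀, .strict (.left h'), rfl, hhead⟩)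
        · exact .inr (.inr ⟨y, args, hne, .inl hy, hw⟩)
      | right h =>
        rcases ih₂ h with ⟨x, hx, hw⟩ | ⟨w₀, hsub, rfl, hhead⟩ | ⟨y, args, hne, hy, hw⟩
        · exact .inl ⟨x, .inr hx, hw⟩
        · exact .inr (.inl ⟨w₀, .strict (.right hsub), rfl, hhead⟩)
        · exact .inr (.inr ⟨y, args, hne, .inr hy, hw⟩)

end Subterms
section Typing
variable {β : Type} {S' : Sig β}

theorem hasTy_unique : ∀ {s : Tm β} {σ τ : Ty}, HasTy S' s σ → HasTy S' s τ → σ = τ := by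
  intro s
  induction s with
  | sym f => intro σ τ h1 h2; cases h1; cases h2; rfl
  | var x => intro σ τ h1 h2; cases h1; cases h2; rfl
  | app a b iha _ =>
    intro σ τ h1 h2
    cases h1 with | app ha1 hb1 =>
    cases h2 with | app ha2 hb2 =>
    have := iha ha1 ha2
    injection this

theorem hasTy_head_exists : ∀ (l : List (Tm β)) {h : Tm β} {σ : Ty},
    HasTy S' (mkApp h l) σ → ∃ τ, HasTy S' h τ := by
  intro l
  induction l with
  | nil => intro h σ hty; exact ⟨σ, hty⟩
  | cons a l ih =>
    intro h σ hty
    rw [mkApp_cons] at hty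
    obtain ⟨τ, hτ⟩ := ih hty
    cases hτ with | app h1 _ => exact ⟨_, h1⟩

theorem spine_ty_len : ∀ (l₁ l₂ : List (Tm β)), l₁.length = l₂.length →
    ∀ {f : β} {σ₁ σ₂ : Ty}, HasTy S' (mkApp (.sym f) l₁) σ₁ →
      HasTy S' (mkApp (.sym f) l₂) σ₂ → σ₁ = σ₂ := by
  intro l₁
  induction l₁ using List.reverseRecOn with
  | nil =>
    intro l₂ hlen f σ₁ σ₂ h1 h2
    have : l₂ = [] := List.eq_nil_of_length_eq_zero hlen.symm
    subst this
    cases h1; cases h2; rfl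
  | append_singleton l₁ a ih =>
    intro l₂ hlen f σ₁ σ₂ h1 h2
    rcases l₂.eq_nil_or_concat with rfl | ⟨l₂', b, rfl⟩
    · simp at hlen
    · rw [List.concat_eq_append] at h2 hlen
      rw [mkApp_concat] at h1 h2
      cases h1 with | app ha1 _ =>
      cases h2 with | app ha2 _ =>
      have hlen' : l₁.length = l₂'.length := by simp at hlen; omega
      have := ih l₂' hlen' ha1 ha2
      injection this

theorem spine_short_arrow : ∀ (l : List (Tm β)) {f : β} {σ : Ty},
    HasTy S' (mkApp (.sym f) l) σ → ∀ (l' : List (Tm β)), l'.length < l.length →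
    ∀ {τ : Ty}, HasTy S' (mkApp (.sym f) l') τ → ∃ a b, τ = Ty.arrow a b := by
  intro l
  induction l using List.reverseRecOn with
  | nil => intro f σ _ l' h; simp at h
  | append_singleton l a ih =>
    intro f σ hty l' hlt τ hty'
    rw [mkApp_concat] at hty
    cases hty with | app ha _ =>
    rcases lt_or_ge l'.length l.length with h | h
    · exact ih ha l' h hty'
    · have : l'.length = l.length := by simp at hlt; omega
      have := spine_ty_len l' l this hty' ha
      exact ⟨_, _, this⟩

end Typing

section Patterns
variable {β : Type} {S' : Sig β}

theorem patSpine_spine : ∀ {s : Tm β}, PatSpine S' s →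
    ∃ c ps, s = mkApp (.sym c) ps ∧ S'.Cons c ∧ ∀ p ∈ ps, Pat S' p := by
  intro s
  induction s with
  | sym f => intro h; cases h with | head hc => exact ⟨f, [], rfl, hc, by simp⟩
  | var x => intro h; cases h
  | app a b iha _ =>
    intro h
    cases h with
    | app hs hp =>
      obtain ⟨c, ps, rfl, hc, hps⟩ := iha hs
      refine ⟨c, ps ++ [b], by rw [mkApp_concat], hc, ?_⟩
      intro p hp'
      rcases List.mem_append.mp hp' with h | h
      · exact hps p h
      · simp at h; subst h; exact hp

theorem patSpine_head {s : Tm β} (h : PatSpine S' s) :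
    ∃ c, s.headSym = some c ∧ S'.Cons c := by
  obtain ⟨c, ps, rfl, hc, _⟩ := patSpine_spine h
  exact ⟨c, headSym_mkApp _ _, hc⟩

theorem data_head {t : Tm β} (h : IsData S' t) :
    ∃ c, t.headSym = some c ∧ S'.Cons c := by
  obtain ⟨hp, hg⟩ := h
  cases hp with
  | var x => simp [Tm.ground] at hg
  | cons hs _ => exact patSpine_head hs

theorem data_base {t : Tm β} (h : IsData S' t) : ∃ i, HasTy S' t (.base i) := by
  obtain ⟨hp, hg⟩ := h
  cases hp with
  | var x => simp [Tm.ground] at hg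
  | cons _ h' => exact h'

/-- Variables of a pattern occur at strict-subterm positions. -/
theorem pat_var_subtm : ∀ (p : Tm β),
    (PatSpine S' p → ∀ x ∈ p.vars, ∀ γ, StrSubtm (γ x) (subst γ p)) ∧
    (Pat S' p → ∀ x ∈ p.vars, ∀ γ, Subtm (γ x) (subst γ p)) := by
  intro p
  induction p with
  | sym f =>
    constructor
    · intro _ x hx; simp [Tm.vars] at hx
    · intro _ x hx; simp [Tm.vars] at hx
  | var y =>
    constructor
    · intro h; cases h
    · intro _ x hx γ
      simp [Tm.vars] at hx
      subst hx
      exact .refl _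
  | app a b iha ihb =>
    have h1 : PatSpine S' (Tm.app a b) → ∀ x ∈ (Tm.app a b).vars, ∀ γ,
        StrSubtm (γ x) (subst γ (Tm.app a b)) := by
      intro hs x hx γ
      cases hs with
      | app hsa hpb =>
        rcases hx with hx | hx
        · exact .left (iha.1 hsa x hx γ)
        · exact .right (ihb.2 hpb x hx γ)
    refine ⟨h1, ?_⟩
    intro hp x hx γ
    cases hp with
    | cons hs _ => exact .strict (h1 hs x hx γ)

end Patterns
section Rewriting
variable {β : Type}

local notation "RTG" R' => Relation.ReflTransGen (Rew R')

theorem rtg_app_left {R' : Set (Rule β)} {a a' b : Tm β}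
    (h : Relation.ReflTransGen (Rew R') a a') :
    Relation.ReflTransGen (Rew R') (.app a b) (.app a' b) :=
  Relation.ReflTransGen.lift (fun x => Tm.app x b) (fun _ _ h => Rew.appL h) _ _ h

theorem rtg_app_right {R' : Set (Rule β)} {a b b' : Tm β}
    (h : Relation.ReflTransGen (Rew R') b b') :
    Relation.ReflTransGen (Rew R') (.app a b) (.app a b') :=
  Relation.ReflTransGen.lift (fun x => Tm.app a x) (fun _ _ h => Rew.appR h) _ _ h

theorem rtg_app {R' : Set (Rule β)} {a a' b b' : Tm β}
    (h1 : Relation.ReflTransGen (Rew R') a a') (h2 : Relation.ReflTransGen (Rew R') b b') :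
    Relation.ReflTransGen (Rew R') (.app a b) (.app a' b') :=
  (rtg_app_left h1).trans (rtg_app_right h2)

theorem rew_mkApp_left {R' : Set (Rule β)} {a a' : Tm β} (l : List (Tm β))
    (h : Rew R' a a') : Rew R' (mkApp a l) (mkApp a' l) := by
  induction l using List.reverseRecOn with
  | nil => exact h
  | append_singleton l b ih => rw [mkApp_concat, mkApp_concat]; exact .appL ih

theorem subst_rtg {R' : Set (Rule β)} {γ δ : ℕ → Tm β}
    (h : ∀ x, Relation.ReflTransGen (Rew R') (γ x) (δ x)) :
    ∀ r : Tm β, Relation.ReflTransGen (Rew R') (subst γ r) (subst δ r) := by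
  intro r
  induction r with
  | sym f => exact .refl
  | var x => exact h x
  | app a b iha ihb => exact rtg_app iha ihb

theorem rtg_mkApp {R' : Set (Rule β)} : ∀ (l₁ l₂ : List (Tm β)) {h h' : Tm β},
    Relation.ReflTransGen (Rew R') h h' → l₁.length = l₂.length →
    (∀ j (hj : j < l₁.length) (hj' : j < l₂.length),
      Relation.ReflTransGen (Rew R') (l₁[j]'hj) (l₂[j]'hj')) →
    Relation.ReflTransGen (Rew R') (mkApp h l₁) (mkApp h' l₂) := by
  intro l₁
  induction l₁ with
  | nil =>
    intro l₂ h h' hh hlen _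
    have : l₂ = [] := List.eq_nil_of_length_eq_zero hlen.symm
    subst this
    exact hh
  | cons a l₁ ih =>
    intro l₂ h h' hh hlen hpt
    cases l₂ with
    | nil => simp at hlen
    | cons b l₂ =>
      rw [mkApp_cons, mkApp_cons]
      refine ih l₂ (rtg_app hh (hpt 0 (by simp) (by simp))) (by simpa using hlen) ?_
      intro j hj hj'
      exact hpt (j+1) (by simpa using hj) (by simpa using hj')

end Rewriting

section Nice
variable {β : Type} (S' : Sig β) (R' : Set (Rule β)) (B : Set (Tm β))

/-- The rule-set properties needed for the abstract development. -/
def NiceR : Prop :=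
  ∀ ρ ∈ R', (∃ f ls, ρ.lhs = mkApp (.sym f) ls ∧ ¬ S'.Cons f ∧ ∀ p ∈ ls, Pat S' p) ∧
    (∀ x, Tm.count x ρ.lhs ≤ 1) ∧ ρ.rhs.vars ⊆ ρ.lhs.vars ∧ ConsFreeRule S' ρ

/-- Every constructor-headed subterm is an element of `B` possibly applied to
further arguments. -/
def OKt (u : Tm β) : Prop :=
  ∀ w, Subtm w u → ConsHead S' w → ∃ b ∈ B, ∃ ex : List (Tm β), w = mkApp b ex

variable {S' R' B}

theorem OKt_mono {u a : Tm β} (h : Subtm a u) (hu : OKt S' B u) : OKt S' B a :=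
  fun w hw hc => hu w (subtm_trans hw h) hc

theorem BSafe_OKt {u : Tm β} (h : BSafe S' B u) : OKt S' B u :=
  fun w hw hc => ⟨w, h w hw hc, [], rfl⟩

theorem lhs_inst_headSym (hN : NiceR S' R') {ρ : Rule β} (hρ : ρ ∈ R') (γ : ℕ → Tm β) :
    ∃ f, (subst γ ρ.lhs).headSym = some f ∧ ¬ S'.Cons f := by
  obtain ⟨⟨f, ls, hl, hnc, _⟩, _⟩ := hN ρ hρ
  refine ⟨f, ?_, hnc⟩
  rw [hl, subst_mkApp, headSym_mkApp]; rfl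

theorem patSpine_nf (hN : NiceR S' R') : ∀ {s v : Tm β}, Rew R' s v →
    PatSpine S' s → s.ground → False := by
  intro s v hrew
  induction hrew with
  | @root ρ γ hρ =>
    intro hs _
    obtain ⟨f, hf, hnc⟩ := lhs_inst_headSym hN hρ γ
    obtain ⟨c, hc, hcons⟩ := patSpine_head hs
    rw [hf] at hc
    injection hc with hc
    exact hnc (hc ▸ hcons)
  | appL h ih =>
    intro hs hg
    cases hs with | app hsa _ => exact ih hsa hg.1
  | appR h ih =>
    intro hs hg
    cases hs with
    | app _ hpb =>
      cases hpb with
      | var x => simp [Tm.ground] at hg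
      | cons hsb _ => exact ih hsb hg.2

theorem data_nf (hN : NiceR S' R') {s v : Tm β} (hd : IsData S' s) (h : Rew R' s v) :
    False := by
  obtain ⟨hp, hg⟩ := hd
  cases hp with
  | var x => simp [Tm.ground] at hg
  | cons hs _ => exact patSpine_nf hN h hs hg

theorem rtg_data_eq (hN : NiceR S' R') {s t : Tm β} (hd : IsData S' s)
    (h : Relation.ReflTransGen (Rew R') s t) : t = s := by
  induction h using Relation.ReflTransGen.head_induction_on with
  | refl => rfl
  | head hab _ _ => exact absurd hab (data_nf hN hd)

/-- Preservation of `OKt` along rewriting. -/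
theorem OKt_rew (hN : NiceR S' R') (hGB : GoodB S' R' B) :
    ∀ {u v : Tm β}, Rew R' u v → OKt S' B u → OKt S' B v := by
  intro u v hrew
  induction hrew with
  | @root ρ γ hρ =>
    intro hOK w hw hc
    obtain ⟨⟨f, ls, hl, hnc, hpats⟩, _, hvars, hcf⟩ := hN ρ hρ
    have var_sub : ∀ y ∈ ρ.lhs.vars, Subtm (γ y) (subst γ ρ.lhs) := by
      intro y hy
      rw [hl] at hy ⊢
      rcases mem_vars_mkApp.mp hy with h | ⟨p, hp, hyp⟩
      · simp [Tm.vars] at h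
      · have h1 : Subtm (γ y) (subst γ p) := (pat_var_subtm p).2 (hpats p hp) y hyp γ
        obtain ⟨j, hj, rfl⟩ := List.getElem_of_mem hp
        have h2 : StrSubtm (subst γ (ls[j]'hj)) (mkApp (Tm.sym f) (ls.map (subst γ))) := by
          have := args_strSub (ls.map (subst γ)) (Tm.sym f) j (by simpa using hj)
          simpa using this
        rw [subst_mkApp]
        exact subtm_trans h1 (.strict h2)
    rcases sub_subst γ ρ.rhs hw with ⟨x, hx, hwx⟩ | ⟨w₀, hsub, rfl, hhead⟩ |
      ⟨y, args, hne, hy, rfl⟩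
    · exact hOK w (subtm_trans hwx (var_sub x (hvars hx))) hc
    · obtain ⟨c, hc', hcons⟩ := hc
      obtain ⟨c₀, hc₀⟩ := Option.isSome_iff_exists.mp hhead
      have hceq : (subst γ w₀).headSym = some c₀ := headSym_subst hc₀
      rw [hc'] at hceq; injection hceq with hceq
      rw [← hceq] at hc₀
      rcases hcf w₀ hsub ⟨c, hc₀, hcons⟩ with hdata | hstr
      · have heq : subst γ w₀ = w₀ := ground_subst hdata.2 γ
        rw [heq]
        exact ⟨w₀, hGB.2.2 ρ hρ w₀ hsub hdata, [], rfl⟩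
      · exact hOK _ (.strict (str_subst γ ρ.lhs hstr)) ⟨c, headSym_subst hc₀, hcons⟩
    · obtain ⟨c, hc', hcons⟩ := hc
      rw [headSym_mkApp] at hc'
      have hsuby : Subtm (γ y) (subst γ ρ.lhs) := var_sub y (hvars hy)
      obtain ⟨b, hb, ex, hbex⟩ := hOK (γ y) hsuby ⟨c, hc', hcons⟩
      exact ⟨b, hb, ex ++ args.map (subst γ), by rw [hbex, mkApp_append]⟩
  | appL h ih =>
    intro hOK w hw hc
    rename_i a a' b
    have hOKa : OKt S' B a := by
      intro w' hw' hc'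
      cases hw' with
      | refl =>
        obtain ⟨c, hc'', hcons⟩ := hc'
        obtain ⟨b₀, hb₀, ex, hbex⟩ := hOK (Tm.app a b) (.refl _) ⟨c, hc'', hcons⟩
        rcases ex.eq_nil_or_concat with rfl | ⟨ex₀, e, rfl⟩
        · have hd : IsData S' (Tm.app a b) := by
            rw [show Tm.app a b = b₀ from hbex]; exact hGB.1 b₀ hb₀
          exact (data_nf hN hd (Rew.appL (t := b) h)).elim
        · rw [List.concat_eq_append, mkApp_concat] at hbex
          injection hbex with h1 _
          exact ⟨b₀, hb₀, ex₀, h1⟩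
      | strict hstr => exact hOK w' (.strict (.left hstr)) hc'
    have hOKa' := ih hOKa
    cases hw with
    | refl =>
      obtain ⟨c, hc', hcons⟩ := hc
      obtain ⟨b₀, hb₀, ex, hbex⟩ := hOKa' a' (.refl _) ⟨c, hc', hcons⟩
      exact ⟨b₀, hb₀, ex ++ [b], by rw [mkApp_concat, ← hbex]⟩
    | strict hstr =>
      cases hstr with
      | left h' => exact hOKa' w (.strict h') hc
      | right h' => exact hOK w (.strict (.right h')) hc
  | appR h ih =>
    intro hOK w hw hc
    rename_i a b b'
    have hOKb : OKt S' B b := fun w' hw' hc' => hOK w' (.strict (.right hw')) hc'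
    have hOKb' := ih hOKb
    cases hw with
    | refl =>
      obtain ⟨c, hc', hcons⟩ := hc
      have : ConsHead S' (Tm.app a b) := ⟨c, hc', hcons⟩
      obtain ⟨b₀, hb₀, ex, hbex⟩ := hOK (Tm.app a b) (.refl _) this
      rcases ex.eq_nil_or_concat with rfl | ⟨ex₀, e, rfl⟩
      · have hd : IsData S' (Tm.app a b) := by
          rw [show Tm.app a b = b₀ from hbex]; exact hGB.1 b₀ hb₀
        exact (data_nf hN hd (Rew.appR (s := a) h)).elim
      · rw [List.concat_eq_append, mkApp_concat] at hbex
        injection hbex with h1 h2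
        exact ⟨b₀, hb₀, ex₀ ++ [b'], by rw [mkApp_concat, h1]⟩
    | strict hstr =>
      cases hstr with
      | left h' => exact hOK w (.strict (.left h')) hc
      | right h' => exact hOKb' w h' hc

theorem OKt_rtg (hN : NiceR S' R') (hGB : GoodB S' R' B) {u v : Tm β}
    (h : Relation.ReflTransGen (Rew R') u v) (hOK : OKt S' B u) : OKt S' B v := by
  induction h with
  | refl => exact hOK
  | tail _ hstep ih => exact OKt_rew hN hGB hstep ih

end Nice
section KeyLemmas
variable {β : Type} {S' : Sig β} {R' : Set (Rule β)} {B : Set (Tm β)}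

theorem rew_consHead_inv (hN : NiceR S' R') {s v : Tm β} (h : Rew R' s v) :
    ∀ {c}, s.headSym = some c → S'.Cons c →
    (∃ a a' b, s = .app a b ∧ v = .app a' b ∧ Rew R' a a') ∨
    (∃ a b b', s = .app a b ∧ v = .app a b' ∧ Rew R' b b') := by
  cases h with
  | @root ρ γ hρ =>
    intro c hc hcons
    obtain ⟨f, hf, hnc⟩ := lhs_inst_headSym hN hρ γ
    rw [hf] at hc
    injection hc with hc
    exact absurd (hc ▸ hcons) hnc
  | appL h => intro c _ _; exact .inl ⟨_, _, _, rfl, rfl, h⟩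
  | appR h => intro c _ _; exact .inr ⟨_, _, _, rfl, rfl, h⟩

theorem rew_overapp (hN : NiceR S' R') {b : Tm β} (hd : IsData S' b)
    {c : β} (hc : b.headSym = some c) (hcons : S'.Cons c) :
    ∀ (ex : List (Tm β)) {v : Tm β}, ex ≠ [] → Rew R' (mkApp b ex) v →
      ∃ ex', v = mkApp b ex' ∧ ex'.length = ex.length := by
  intro ex
  induction ex using List.reverseRecOn with
  | nil => intro v h; exact absurd rfl h
  | append_singleton ex₀ e ih =>
    intro v _ hrew
    rw [mkApp_concat] at hrew
    have hhead : (Tm.app (mkApp b ex₀) e).headSym = some c := by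
      rw [headSym_app, headSym_mkApp]; exact hc
    rcases rew_consHead_inv hN hrew hhead hcons with
      ⟨a, a', b', heq, rfl, hstep⟩ | ⟨a, b', b'', heq, rfl, hstep⟩
    · injection heq with h1 h2
      subst h2
      rw [← h1] at hstep
      rcases ex₀.eq_nil_or_concat with rfl | ⟨l, x, rfl⟩
      · exact (data_nf hN hd hstep).elim
      · obtain ⟨ex', rfl, hlen⟩ := ih (by simp) hstep
        exact ⟨ex' ++ [e], by rw [mkApp_concat], by simp [hlen]⟩
    · injection heq with h1 h2
      subst h2
      rw [← h1]
      exact ⟨ex₀ ++ [b''], by rw [mkApp_concat], by simp⟩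

/-- A constructor-headed `OKt` term reducing to a data term is already that term. -/
theorem consHead_rtg_data (hN : NiceR S' R') (hGB : GoodB S' R' B) {u t : Tm β}
    (hOK : OKt S' B u) (hc : ConsHead S' u)
    (hrtg : Relation.ReflTransGen (Rew R') u t) (hd : IsData S' t) : u = t := by
  obtain ⟨b, hb, ex, rfl⟩ := hOK u (.refl _) hc
  have hdb : IsData S' b := hGB.1 b hb
  obtain ⟨cb, hcb, hconsb⟩ := data_head hdb
  rcases ex.eq_nil_or_concat with rfl | ⟨ex₀, e, rfl⟩
  · exact (rtg_data_eq hN hdb hrtg).symm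
  · exfalso
    rw [List.concat_eq_append] at hrtg
    -- every reduct keeps the shape `mkApp b ex'` with `ex'` nonempty
    have key : ∀ {w}, Relation.ReflTransGen (Rew R') w t →
        ∀ ex', ex' ≠ [] → w = mkApp b ex' → ∃ ex'', t = mkApp b ex'' ∧ ex'' ≠ [] := by
      intro w hw
      induction hw using Relation.ReflTransGen.head_induction_on with
      | refl => intro ex' hne heq; exact ⟨ex', heq, hne⟩
      | head hab hbt ih =>
        intro ex' hne heq
        subst heq
        obtain ⟨ex'', rfl, hlen⟩ := rew_overapp hN hdb hcb hconsb ex' hne hab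
        refine ih ex'' ?_ rfl
        intro h; rw [h] at hlen; simp at hlen; exact hne (List.length_eq_zero_iff.mp hlen.symm)
    obtain ⟨ex'', heq, hne⟩ := key hrtg (ex₀ ++ [e]) (by simp) rfl
    -- typing contradiction: `b` has base type but is applied
    obtain ⟨i, hbase⟩ := data_base hdb
    obtain ⟨j, hbase'⟩ := data_base hd
    rw [heq] at hbase'
    have hbsp : b = mkApp (.sym cb) b.argsT := headT_sym_spine (headT_of_headSym hcb)
    rw [hbsp, ← mkApp_append] at hbase'
    rw [hbsp] at hbase
    have hlen : b.argsT.length < (b.argsT ++ ex'').length := by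
      simp
      exact List.length_pos_iff.mpr hne
    obtain ⟨a', b', habs⟩ := spine_short_arrow _ hbase' b.argsT hlen hbase
    exact Ty.noConfusion habs

/-- An `OKt` instance of a non-variable pattern is a data term. -/
theorem pat_inst_data (hN : NiceR S' R') (hGB : GoodB S' R' B) {p : Tm β}
    (hp : Pat S' p) (hnv : ¬ ∃ x, p = .var x) {γ : ℕ → Tm β}
    (hOK : OKt S' B (subst γ p)) : IsData S' (subst γ p) := by
  cases hp with
  | var x => exact absurd ⟨x, rfl⟩ hnv
  | cons hs hty =>
    obtain ⟨c, ps, rfl, hc, hps⟩ := patSpine_spine hs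
    obtain ⟨i, hbase⟩ := hty
    rw [subst_mkApp] at hOK ⊢
    have hch : ConsHead S' (mkApp (subst γ (Tm.sym c)) (ps.map (subst γ))) :=
      ⟨c, by rw [headSym_mkApp]; rfl, hc⟩
    obtain ⟨b, hb, ex, hbex⟩ := hOK _ (.refl _) hch
    have hdb : IsData S' b := hGB.1 b hb
    -- identify the spine of b
    have hhead : b.headT = Tm.sym c := by
      have h1 := congrArg Tm.headT hbex
      rw [headT_mkApp, headT_mkApp] at h1
      exact h1.symm
    have hbspine : b = mkApp (.sym c) b.argsT := headT_sym_spine hhead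
    have hargs : ps.map (subst γ) = b.argsT ++ ex := by
      have h2 := congrArg Tm.argsT hbex
      rw [argsT_mkApp, argsT_mkApp] at h2
      simpa [Tm.argsT, subst] using h2
    rcases ex.eq_nil_or_concat with rfl | ⟨l, x, rfl⟩
    · rw [show (mkApp (subst γ (Tm.sym c)) (ps.map (subst γ))) = b from hbex]
      exact hdb
    · exfalso
      obtain ⟨i₀, hbase₀⟩ := data_base hdb
      rw [hbspine] at hbase₀
      have hlen : b.argsT.length < ps.length := by
        have := congrArg List.length hargs
        simp at this
        omega
      obtain ⟨a', b', habs⟩ := spine_short_arrow ps hbase b.argsT hlen hbase₀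
      exact Ty.noConfusion habs

end KeyLemmas
section Parallel
variable {β : Type}

/-- Parallel reduction (Type-valued, so that we can measure derivations). -/
inductive ParD (R' : Set (Rule β)) : Tm β → Tm β → Type where
  | sym (f : β) : ParD R' (.sym f) (.sym f)
  | var (x : ℕ) : ParD R' (.var x) (.var x)
  | app {s s' t t' : Tm β} : ParD R' s s' → ParD R' t t' →
      ParD R' (.app s t) (.app s' t')
  | rule (ρ : Rule β) (γ δ : ℕ → Tm β) : ρ ∈ R' → (∀ x, ParD R' (γ x) (δ x)) →
      ParD R' (subst γ ρ.lhs) (subst δ ρ.rhs)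

variable {R' : Set (Rule β)}

def reflD : (t : Tm β) → ParD R' t t
  | .sym f => .sym f
  | .var x => .var x
  | .app a b => .app (reflD a) (reflD b)

/-- Weighted count of variables of a term. -/
def congM (g : ℕ → ℕ) : Tm β → ℕ
  | .sym _ => 0
  | .var x => g x
  | .app a b => congM g a + congM g b

/-- Measure of a parallel derivation: each rule node is paid for by the weighted
variable count of its right-hand side, which accounts for duplication. -/
def mu : {s t : Tm β} → ParD R' s t → ℕ
  | _, _, .sym _ => 0
  | _, _, .var _ => 0
  | _, _, .app p q => mu p + mu q
  | _, _, .rule ρ _ _ _ subs => congM (fun x => mu (subs x)) ρ.rhs + 1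

theorem mu_reflD : ∀ t : Tm β, mu (R' := R') (reflD t) = 0 := by
  intro t
  induction t with
  | sym f => rfl
  | var x => rfl
  | app a b iha ihb => simp [reflD, mu, iha, ihb]

def congD {γ δ : ℕ → Tm β} (subs : ∀ x, ParD R' (γ x) (δ x)) :
    (r : Tm β) → ParD R' (subst γ r) (subst δ r)
  | .sym f => .sym f
  | .var x => subs x
  | .app a b => .app (congD subs a) (congD subs b)

theorem mu_congD {γ δ : ℕ → Tm β} (subs : ∀ x, ParD R' (γ x) (δ x)) :
    ∀ r : Tm β, mu (congD subs r) = congM (fun x => mu (subs x)) r := by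
  intro r
  induction r with
  | sym f => rfl
  | var x => rfl
  | app a b iha ihb => simp [congD, mu, congM, iha, ihb]

theorem parD_rtg : ∀ {s t : Tm β}, ParD R' s t → Relation.ReflTransGen (Rew R') s t := by
  intro s t P
  induction P with
  | sym f => exact .refl
  | var x => exact .refl
  | app p q ihp ihq => exact rtg_app ihp ihq
  | rule ρ γ δ hρ subs ih =>
    exact (subst_rtg ih ρ.lhs).trans (.single (Rew.root hρ))

theorem rew_parD {a b : Tm β} (h : Rew R' a b) : Nonempty (ParD R' a b) := by
  induction h with
  | root hρ => exact ⟨.rule _ _ _ hρ (fun x => reflD _)⟩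
  | appL _ ih => obtain ⟨p⟩ := ih; exact ⟨.app p (reflD _)⟩
  | appR _ ih => obtain ⟨p⟩ := ih; exact ⟨.app (reflD _) p⟩

/-- A list of parallel derivations between pairs of terms. -/
abbrev PList (R' : Set (Rule β)) := List ((ab : Tm β × Tm β) × ParD R' ab.1 ab.2)

def PList.srcs (L : PList R') : List (Tm β) := L.map (fun d => d.1.1)
def PList.tgts (L : PList R') : List (Tm β) := L.map (fun d => d.1.2)

def mkAppD : {h h' : Tm β} → ParD R' h h' → (L : PList R') →
    ParD R' (mkApp h L.srcs) (mkApp h' L.tgts)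
  | _, _, P, [] => P
  | _, _, P, d :: L => mkAppD (.app P d.2) L

theorem mu_mkAppD : ∀ (L : PList R') {h h' : Tm β} (P : ParD R' h h'),
    mu (mkAppD P L) = mu P + (L.map (fun d => mu d.2)).sum := by
  intro L
  induction L with
  | nil => intro h h' P; simp [mkAppD]; rfl
  | cons d L ih =>
    intro h h' P
    simp [mkAppD, ih, mu]
    rw [← add_assoc]; exact ih _

theorem parD_cases {s u : Tm β} (P : ParD R' s u) :
    ((∃ f, s = Tm.sym f ∧ u = Tm.sym f) ∨ (∃ x, s = Tm.var x ∧ u = Tm.var x)) ∨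
    (∃ s₁ s₂ u₁ u₂, ∃ (P₁ : ParD R' s₁ u₁) (P₂ : ParD R' s₂ u₂),
       s = .app s₁ s₂ ∧ u = .app u₁ u₂ ∧ mu P₁ + mu P₂ = mu P) ∨
    (∃ ρ γ δ, ρ ∈ R' ∧ ∃ subs : ∀ x, ParD R' (γ x) (δ x),
       s = subst γ ρ.lhs ∧ u = subst δ ρ.rhs ∧
       congM (fun x => mu (subs x)) ρ.rhs + 1 = mu P) := by
  cases P with
  | sym f => exact .inl (.inl ⟨f, rfl, rfl⟩)
  | var x => exact .inl (.inr ⟨x, rfl, rfl⟩)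
  | app P₁ P₂ => exact .inr (.inl ⟨_, _, _, _, P₁, P₂, rfl, rfl, rfl⟩)
  | rule ρ γ δ hρ subs => exact .inr (.inr ⟨ρ, γ, δ, hρ, subs, rfl, rfl, rfl⟩)

def castTgt {s u u' : Tm β} (h : u = u') (P : ParD R' s u) : ParD R' s u' := h ▸ P

theorem mu_castTgt {s u u' : Tm β} (h : u = u') (P : ParD R' s u) :
    mu (castTgt h P) = mu P := by cases h; rfl

def castSrc {s s' u : Tm β} (h : s = s') (P : ParD R' s u) : ParD R' s' u := h ▸ P

theorem mu_castSrc {s s' u : Tm β} (h : s = s') (P : ParD R' s u) :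
    mu (castSrc h P) = mu P := by cases h; rfl

/-- Spine decomposition of a parallel derivation. -/
theorem parD_spine {f : β} : ∀ (us : List (Tm β)) {s : Tm β}
    (P : ParD R' s (mkApp (.sym f) us)),
    (∃ L : PList R', s = mkApp (.sym f) L.srcs ∧ us = L.tgts ∧
      ∀ d ∈ L, mu d.2 ≤ mu P) ∨
    (∃ ρ γ bs, ρ ∈ R' ∧ s = mkApp (subst γ ρ.lhs) bs ∧
      ∃ P' : ParD R' (mkApp (subst γ ρ.rhs) bs) (mkApp (.sym f) us), mu P' < mu P) := by
  intro us
  induction us using List.reverseRecOn with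
  | nil =>
    intro s P
    rcases parD_cases P with (⟨g, hs, hu⟩ | ⟨x, hs, hu⟩) |
      ⟨s₁, s₂, u₁, u₂, P₁, P₂, hs, hu, hmu⟩ | ⟨ρ, γ, δ, hρ, subs, hs, hu, hmu⟩
    · have hgf : Tm.sym (α := β) f = Tm.sym g := hu
      injection hgf with hgf
      refine .inl ⟨[], ?_, rfl, by simp⟩
      rw [hs, hgf]
      rfl
    · exact absurd hu (by simp [mkApp_nil])
    · exact absurd hu (by simp [mkApp_nil])
    · refine .inr ⟨ρ, γ, [], hρ, hs,
        castTgt hu.symm (congD subs ρ.rhs), ?_⟩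
      exact lt_of_eq_of_lt (mu_castTgt hu.symm (congD subs ρ.rhs)) (by rw [mu_congD, ← hmu]; omega)
  | append_singleton us a ih =>
    intro s P
    rcases parD_cases P with (⟨g, hs, hu⟩ | ⟨x, hs, hu⟩) |
      ⟨s₁, s₂, u₁, u₂, P₁, P₂, hs, hu, hmu⟩ | ⟨ρ, γ, δ, hρ, subs, hs, hu, hmu⟩
    · rw [mkApp_concat] at hu; exact absurd hu (by simp)
    · rw [mkApp_concat] at hu; exact absurd hu (by simp)
    · rw [mkApp_concat] at hu
      injection hu with hu₁ hu₂
      subst hs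
      cases hu₁
      cases hu₂
      rcases ih P₁ with ⟨L, hseq, htgt, hbound⟩ | ⟨ρ, γ, bs, hρ, hseq, P', hmu'⟩
      · refine .inl ⟨L ++ [⟨(s₂, a), P₂⟩], ?_, ?_, ?_⟩
        · rw [hseq]
          simp [PList.srcs, mkApp_concat]
        · rw [htgt]
          simp [PList.tgts]
        · intro d hd
          rcases List.mem_append.mp hd with hd | hd
          · exact le_trans (hbound d hd) (by omega)
          · simp at hd; subst hd; simp; omega
      · refine .inr ⟨ρ, γ, bs ++ [s₂], hρ, by rw [mkApp_concat, ← hseq],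
          castSrc (mkApp_concat _ _ _).symm
            (castTgt (mkApp_concat _ _ _).symm (.app P' P₂)), ?_⟩
        rw [mu_castSrc, mu_castTgt]
        have hmuapp : mu (ParD.app P' P₂) = mu P' + mu P₂ := rfl
        rw [hmuapp]
        omega
    · refine .inr ⟨ρ, γ, [], hρ, hs,
        castTgt hu.symm (congD subs ρ.rhs), ?_⟩
      exact lt_of_eq_of_lt (mu_castTgt hu.symm (congD subs ρ.rhs)) (by rw [mu_congD, ← hmu]; omega)

end Parallel
section SemiOutBasics
variable {β : Type}

theorem semiOut_rtg {R' : Set (Rule β)} : ∀ {s t : Tm β}, SemiOut R' s t →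
    Relation.ReflTransGen (Rew R') s t := by
  intro s t h
  induction h with
  | refl s => exact .refl
  | @step f ss ls ρ γ t hρ hl hle hargs hvar hrest ihargs ihrest =>
    have hlen : ss.length = (ls.map (subst γ) ++ ss.drop ls.length).length := by
      simp; omega
    have h1 : Relation.ReflTransGen (Rew R') (mkApp (Tm.sym f) ss)
        (mkApp (Tm.sym f) (ls.map (subst γ) ++ ss.drop ls.length)) := by
      refine rtg_mkApp ss _ .refl hlen ?_
      intro j hj hj'
      rcases lt_or_ge j ls.length with h | h
      · have e : (ls.map (subst γ) ++ ss.drop ls.length)[j]'hj' =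
            subst γ (ls[j]'h) := by
          rw [List.getElem_append_left (by simpa using h), List.getElem_map]
        rw [e]
        exact ihargs j h
      · have e : (ls.map (subst γ) ++ ss.drop ls.length)[j]'hj' = ss[j]'hj := by
          rw [List.getElem_append_right (by simpa using h)]
          rw [List.getElem_drop]
          congr 1
          simp
          omega
        rw [e]
    have h2 : Rew R' (mkApp (Tm.sym f) (ls.map (subst γ) ++ ss.drop ls.length))
        (mkApp (subst γ ρ.rhs) (ss.drop ls.length)) := by
      have e : mkApp (Tm.sym f) (ls.map (subst γ) ++ ss.drop ls.length) =
          mkApp (subst γ ρ.lhs) (ss.drop ls.length) := by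
        rw [hl, subst_mkApp, mkApp_append]; rfl
      rw [e]
      exact rew_mkApp_left _ (Rew.root hρ)
    exact (h1.trans (.single h2)).trans ihrest

theorem head_step_semiOut {S' : Sig β} {R' : Set (Rule β)} (hN : NiceR S' R') {ρ : Rule β}
    (hρ : ρ ∈ R') (γ : ℕ → Tm β) (bs : List (Tm β)) {t : Tm β}
    (hrest : SemiOut R' (mkApp (subst γ ρ.rhs) bs) t) :
    SemiOut R' (mkApp (subst γ ρ.lhs) bs) t := by
  obtain ⟨⟨f, ls, hl, hnc, hpats⟩, -⟩ := hN ρ hρ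
  have hs : mkApp (subst γ ρ.lhs) bs = mkApp (Tm.sym f) (ls.map (subst γ) ++ bs) := by
    rw [hl, subst_mkApp, mkApp_append]; rfl
  rw [hs]
  have hle : ls.length ≤ (ls.map (subst γ) ++ bs).length := by simp
  have harg : ∀ j (hj : j < ls.length),
      (ls.map (subst γ) ++ bs)[j]'(lt_of_lt_of_le hj hle) = subst γ (ls[j]'hj) := by
    intro j hj
    rw [List.getElem_append_left (by simpa using hj), List.getElem_map]
  refine SemiOut.step (ls := ls) (ρ := ρ) (γ := γ) hρ hl hle ?_ ?_ ?_
  · intro j hj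
    rw [harg j hj]
    exact .refl _
  · intro j hj _
    rw [harg j hj]
  · have e : (ls.map (subst γ) ++ bs).drop ls.length = bs := by
      rw [← List.length_map (as := ls) (subst γ)]
      exact List.drop_left
    rw [e]
    exact hrest

end SemiOutBasics
section Linear
variable {β : Type}

theorem getElem_le_sum : ∀ (l : List ℕ) (j : ℕ) (hj : j < l.length), l[j] ≤ l.sum := by
  intro l
  induction l with
  | nil => intro j hj; simp at hj
  | cons a l ih =>
    intro j hj
    match j with
    | 0 => simp
    | j + 1 =>
      have := ih j (by simpa using hj)
      simp only [List.getElem_cons_succ, List.sum_cons]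
      omega

theorem two_getElem_le_sum : ∀ (l : List ℕ) (j j' : ℕ) (hj : j < l.length)
    (hj' : j' < l.length), j ≠ j' → l[j] + l[j'] ≤ l.sum := by
  intro l
  induction l with
  | nil => intro j j' hj; simp at hj
  | cons a l ih =>
    intro j j' hj hj' hne
    match j, j' with
    | 0, 0 => exact absurd rfl hne
    | 0, j' + 1 =>
      have := getElem_le_sum l j' (by simpa using hj')
      simp only [List.getElem_cons_zero, List.getElem_cons_succ, List.sum_cons]
      omega
    | j + 1, 0 =>
      have := getElem_le_sum l j (by simpa using hj)
      simp only [List.getElem_cons_zero, List.getElem_cons_succ, List.sum_cons]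
      omega
    | j + 1, j' + 1 =>
      have := ih j j' (by simpa using hj) (by simpa using hj') (by omega)
      simp only [List.getElem_cons_succ, List.sum_cons]
      omega

/-- In a left-linear spine, a variable argument position is unique and the
variable cannot occur in another argument. -/
theorem linear_unique {f : β} {ls : List (Tm β)}
    (hlin : ∀ x, Tm.count x (mkApp (Tm.sym f) ls) ≤ 1)
    {j j' : ℕ} (hj : j < ls.length) (hj' : j' < ls.length) {y : ℕ}
    (hvj : ls[j]'hj = Tm.var y) (hmem : y ∈ (ls[j']'hj').vars) : j = j' := by
  by_contra hne
  have h1 : 1 ≤ Tm.count y (ls[j]'hj) := by rw [hvj]; simp [Tm.count]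
  have h2 : 1 ≤ Tm.count y (ls[j']'hj') := count_pos_of_mem_vars hmem
  have hsum := two_getElem_le_sum (ls.map (Tm.count y)) j j'
    (by simpa using hj) (by simpa using hj') hne
  rw [List.getElem_map, List.getElem_map] at hsum
  have := hlin y
  rw [count_mkApp] at this
  simp [Tm.count] at this
  omega

end Linear
section Prepend
variable {β : Type} {S' : Sig β} {R' : Set (Rule β)} {B : Set (Tm β)}

theorem prepend (hN : NiceR S' R') (hGB : GoodB S' R' B) :
    ∀ {u t : Tm β}, SemiOut R' u t → IsData S' t →
    ∀ (n : ℕ) {s : Tm β} (P : ParD R' s u), mu P ≤ n → OKt S' B s →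
      SemiOut R' s t := by
  intro u t E
  induction E with
  | refl u =>
    intro hd n
    induction n using Nat.strong_induction_on with
    | _ n IH =>
    intro s P hle hOK
    obtain ⟨c, hc, hcons⟩ := data_head hd
    have hu : u = mkApp (.sym c) u.argsT := headT_sym_spine (headT_of_headSym hc)
    rcases parD_spine (f := c) u.argsT (castTgt hu P) with ⟨L, hs, htgt, hbound⟩ |
      ⟨ρ, γ, bs, hρ, hs, P', hmu'⟩
    · have hch : ConsHead S' s := ⟨c, by rw [hs, headSym_mkApp]; rfl, hcons⟩
      have heq := consHead_rtg_data hN hGB hOK hch (parD_rtg P) hd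
      rw [heq]
      exact .refl _
    · rw [mu_castTgt] at hmu'
      subst hs
      have hstep : Rew R' (mkApp (subst γ ρ.lhs) bs) (mkApp (subst γ ρ.rhs) bs) :=
        rew_mkApp_left bs (Rew.root hρ)
      exact head_step_semiOut hN hρ γ bs
        (IH (mu P') (by omega) (castTgt hu.symm P') (by rw [mu_castTgt])
          (OKt_rew hN hGB hstep hOK))
  | @step f us ls ρE γE t hρE hlE hleE hargsE hvarE hrestE ihargs ihrest =>
    intro hd n
    induction n using Nat.strong_induction_on with
    | _ n IH =>
    intro s P hle hOK
    rcases parD_spine (f := f) us P with ⟨L, hs, htgt, hbound⟩ |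
      ⟨ρ, γ, bs, hρ, hs, P', hmu'⟩
    swap
    · -- the parallel step contracts a redex at the head of the spine
      subst hs
      have hstep : Rew R' (mkApp (subst γ ρ.lhs) bs) (mkApp (subst γ ρ.rhs) bs) :=
        rew_mkApp_left bs (Rew.root hρ)
      exact head_step_semiOut hN hρ γ bs
        (IH (mu P') (by omega) P' le_rfl (OKt_rew hN hGB hstep hOK))
    · -- congruence: `s` has the same spine
      classical
      obtain ⟨⟨g, ls', hl', hnc', hpats'⟩, hlin, hvars, hcf⟩ := hN ρE hρE
      obtain ⟨hgf, hls⟩ := spine_inj (hlE.symm.trans hl')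
      subst hgf
      subst hls
      subst htgt
      have hlin' : ∀ x, Tm.count x (mkApp (Tm.sym f) ls) ≤ 1 := by
        intro x; have := hlin x; rwa [hlE] at this
      have hlenL : L.srcs.length = L.tgts.length := by
        simp [PList.srcs, PList.tgts]
      have hlenL' : L.srcs.length = L.length := by simp [PList.srcs]
      have hlels : ls.length ≤ L.srcs.length := by rw [hlenL]; exact hleE
      -- pointwise derivations
      have e1 : ∀ j (hj : j < L.length), (L[j]'hj).1.1 = L.srcs[j]'(by rwa [hlenL']) := by
        intro j hj; simp [PList.srcs]
      have e2 : ∀ j (hj : j < L.length), (L[j]'hj).1.2 =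
          L.tgts[j]'(by simpa [PList.tgts] using hj) := by
        intro j hj; simp [PList.tgts]
      let QD : ∀ j (hj : j < L.length), ParD R' (L.srcs[j]'(by rwa [hlenL']))
          (L.tgts[j]'(by simpa [PList.tgts] using hj)) :=
        fun j hj => castSrc (e1 j hj) (castTgt (e2 j hj) (L[j]'hj).2)
      have hQmu : ∀ j (hj : j < L.length), mu (QD j hj) ≤ mu P := by
        intro j hj
        show mu (castSrc (e1 j hj) (castTgt (e2 j hj) (L[j]'hj).2)) ≤ mu P
        rw [mu_castSrc, mu_castTgt]
        exact hbound _ (List.getElem_mem hj)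
      have hjL : ∀ {j}, j < ls.length → j < L.length := by
        intro j hj; rw [← hlenL']; exact lt_of_lt_of_le hj hlels
      -- the adjusted substitution
      set γ' : ℕ → Tm β := fun y =>
        if h : ∃ j, ∃ (hj : j < ls.length), ls[j]'hj = Tm.var y then
          L.srcs[h.choose]'(lt_of_lt_of_le h.choose_spec.choose hlels)
        else γE y with hγ'
      have F1 : ∀ (j : ℕ) (hj : j < ls.length) (y : ℕ), ls[j]'hj = Tm.var y →
          γ' y = L.srcs[j]'(lt_of_lt_of_le hj hlels) := by
        intro j hj y hy
        have hcond : ∃ j, ∃ (hj : j < ls.length), ls[j]'hj = Tm.var y := ⟨j, hj, hy⟩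
        rw [hγ']
        simp only [dif_pos hcond]
        have huniq : hcond.choose = j :=
          linear_unique hlin' hcond.choose_spec.choose hj hcond.choose_spec.choose_spec
            (by rw [hy]; simp [Tm.vars])
        congr 1
      have F2 : ∀ (j : ℕ) (hj : j < ls.length), (¬ ∃ y, ls[j]'hj = Tm.var y) →
          subst γ' (ls[j]'hj) = subst γE (ls[j]'hj) := by
        intro j hj hnv
        refine subst_congr ?_
        intro y hy
        rw [hγ']
        refine dif_neg ?_
        rintro ⟨j₀, hj₀, hvj₀⟩
        have : j₀ = j := linear_unique hlin' hj₀ hj hvj₀ hy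
        subst this
        exact hnv ⟨y, hvj₀⟩
      have Fsub : ∀ y, ¬ (∃ j, ∃ (hj : j < ls.length), ls[j]'hj = Tm.var y) → γ' y = γE y := by
        intro y h
        rw [hγ']
        exact dif_neg h
      -- OKt of the arguments
      have hOKs : OKt S' B (mkApp (Tm.sym f) L.srcs) := hs ▸ hOK
      have hOKarg : ∀ j (hj : j < L.srcs.length), OKt S' B (L.srcs[j]'hj) := by
        intro j hj
        exact OKt_mono (.strict (args_strSub L.srcs (Tm.sym f) j hj)) hOKs
      -- reductions of pattern arguments to their matched instances
      have hrtgarg : ∀ j (hj : j < ls.length),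
          Relation.ReflTransGen (Rew R') (L.srcs[j]'(lt_of_lt_of_le hj hlels))
            (subst γE (ls[j]'hj)) := by
        intro j hj
        exact (parD_rtg (QD j (hjL hj))).trans (semiOut_rtg (hargsE j hj))
      -- data for non-variable pattern instances
      have hdataarg : ∀ j (hj : j < ls.length), (¬ ∃ y, ls[j]'hj = Tm.var y) →
          IsData S' (subst γE (ls[j]'hj)) := by
        intro j hj hnv
        refine pat_inst_data hN hGB (hpats' _ (List.getElem_mem hj)) hnv ?_
        exact OKt_rtg hN hGB (hrtgarg j hj) (hOKarg j (lt_of_lt_of_le hj hlels))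
      -- the three obligations of the step
      have hargs' : ∀ j (hj : j < ls.length),
          SemiOut R' (L.srcs[j]'(lt_of_lt_of_le hj hlels)) (subst γ' (ls[j]'hj)) := by
        intro j hj
        by_cases hv : ∃ y, ls[j]'hj = Tm.var y
        · obtain ⟨y, hy⟩ := hv
          rw [hy]
          show SemiOut R' _ (γ' y)
          rw [F1 j hj y hy]
          exact .refl _
        · rw [F2 j hj hv]
          exact ihargs j hj (hdataarg j hj hv) (mu (QD j (hjL hj))) (QD j (hjL hj)) le_rfl
            (hOKarg j (lt_of_lt_of_le hj hlels))
      have hvar' : ∀ j (hj : j < ls.length), (∃ y, ls[j]'hj = Tm.var y) →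
          L.srcs[j]'(lt_of_lt_of_le hj hlels) = subst γ' (ls[j]'hj) := by
        intro j hj ⟨y, hy⟩
        rw [hy]
        show _ = γ' y
        rw [F1 j hj y hy]
      -- reduction from `s` to the term rewritten at the head
      have hrtg1 : Relation.ReflTransGen (Rew R') (mkApp (Tm.sym f) L.srcs)
          (mkApp (Tm.sym f) (ls.map (subst γ') ++ L.srcs.drop ls.length)) := by
        refine rtg_mkApp _ _ .refl (by simp; omega) ?_
        intro j hj hj'
        rcases lt_or_ge j ls.length with h | h
        · have e : (ls.map (subst γ') ++ L.srcs.drop ls.length)[j]'hj' =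
              subst γ' (ls[j]'h) := by
            rw [List.getElem_append_left (by simpa using h), List.getElem_map]
          rw [e]
          exact semiOut_rtg (hargs' j h)
        · have e : (ls.map (subst γ') ++ L.srcs.drop ls.length)[j]'hj' =
              L.srcs[j]'hj := by
            rw [List.getElem_append_right (by simpa using h)]
            rw [List.getElem_drop]
            congr 1
            simp
            omega
          rw [e]
      have hrew2 : Rew R' (mkApp (Tm.sym f) (ls.map (subst γ') ++ L.srcs.drop ls.length))
          (mkApp (subst γ' ρE.rhs) (L.srcs.drop ls.length)) := by
        have e : mkApp (Tm.sym f) (ls.map (subst γ') ++ L.srcs.drop ls.length) =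
            mkApp (subst γ' ρE.lhs) (L.srcs.drop ls.length) := by
          rw [hlE, subst_mkApp, mkApp_append]; rfl
        rw [e]
        exact rew_mkApp_left _ (Rew.root hρE)
      have hOKrest : OKt S' B (mkApp (subst γ' ρE.rhs) (L.srcs.drop ls.length)) :=
        OKt_rtg hN hGB (hrtg1.trans (.single hrew2)) hOKs
      -- the parallel derivation for the rest
      have hsubs : ∀ y, ParD R' (γ' y) (γE y) := by
        intro y
        by_cases h : ∃ j, ∃ (hj : j < ls.length), ls[j]'hj = Tm.var y
        · have ee1 : γ' y = L.srcs[h.choose]'(lt_of_lt_of_le h.choose_spec.choose hlels) :=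
            F1 h.choose h.choose_spec.choose y h.choose_spec.choose_spec
          have ee2 : L.tgts[h.choose]'(lt_of_lt_of_le h.choose_spec.choose hleE) = γE y := by
            have := hvarE h.choose h.choose_spec.choose ⟨y, h.choose_spec.choose_spec⟩
            rw [this, h.choose_spec.choose_spec]
            rfl
          exact castSrc ee1.symm (castTgt ee2 (QD h.choose (hjL h.choose_spec.choose)))
        · exact castSrc (Fsub y h).symm (reflD (γE y))
      have hP'' : Nonempty (ParD R' (mkApp (subst γ' ρE.rhs) (L.srcs.drop ls.length))
          (mkApp (subst γE ρE.rhs) (L.tgts.drop ls.length))) := by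
        have e1 : L.srcs.drop ls.length = PList.srcs (L.drop ls.length) := by
          simp [PList.srcs, List.map_drop]
        have e2 : L.tgts.drop ls.length = PList.tgts (L.drop ls.length) := by
          simp [PList.tgts, List.map_drop]
        rw [e1, e2]
        exact ⟨mkAppD (congD hsubs ρE.rhs) (L.drop ls.length)⟩
      obtain ⟨P''⟩ := hP''
      have hrest' : SemiOut R' (mkApp (subst γ' ρE.rhs) (L.srcs.drop ls.length)) t :=
        ihrest hd (mu P'') P'' le_rfl hOKrest
      -- assemble
      rw [hs]
      exact SemiOut.step hρE hlE hlels hargs' hvar' hrest'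
end Prepend
section Labels
open Classical
variable {α : Type} {S : Sig α}

theorem label_mkApp (i : ℕ) (h : Tm α) (l : List (Tm α)) :
    labelTm S i (mkApp h l) = mkApp (labelTm S i h) (l.map (labelTm S i)) := by
  induction l generalizing h with
  | nil => rfl
  | cons a l ih => rw [mkApp_cons, ih]; rfl

theorem count_label (i : ℕ) (x : ℕ) : ∀ w : Tm α,
    Tm.count x (labelTm S i w) = Tm.count x w := by
  intro w
  induction w with
  | sym f => rfl
  | var y => rfl
  | app a b iha ihb => simp [labelTm, Tm.count, iha, ihb]

theorem vars_label (i : ℕ) : ∀ w : Tm α, (labelTm S i w).vars = w.vars := by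
  intro w
  induction w with
  | sym f => rfl
  | var y => rfl
  | app a b iha ihb => simp [labelTm, Tm.vars, iha, ihb]

theorem ground_label (i : ℕ) : ∀ w : Tm α, (labelTm S i w).ground ↔ w.ground := by
  intro w
  induction w with
  | sym f => simp [labelTm, Tm.ground]
  | var y => simp [labelTm, Tm.ground]
  | app a b iha ihb => simp [labelTm, Tm.ground, iha, ihb]

theorem headSym_label (i : ℕ) : ∀ w : Tm α,
    (labelTm S i w).headSym =
      w.headSym.map (fun f => (f, if S.Cons f then 0 else i)) := by
  intro w
  induction w with
  | sym f => rfl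
  | var y => rfl
  | app a b iha _ => exact iha

theorem consHead_label_inv {i : ℕ} {w : Tm α}
    (h : ConsHead (SigLab S) (labelTm S i w)) : ConsHead S w := by
  obtain ⟨c, hc, hcons⟩ := h
  rw [headSym_label] at hc
  match hw : w.headSym with
  | none => rw [hw] at hc; simp at hc
  | some c₀ =>
    rw [hw] at hc
    simp at hc
    refine ⟨c₀, hw, ?_⟩
    have : (SigLab S).Cons c = S.Cons c₀ := by rw [← hc]; rfl
    rwa [this] at hcons

theorem hasTy_label (i : ℕ) : ∀ {w : Tm α} {σ : Ty}, HasTy S w σ →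
    HasTy (SigLab S) (labelTm S i w) σ := by
  intro w σ h
  induction h with
  | sym f => exact HasTy.sym (S := SigLab S) (f, if S.Cons f then 0 else i)
  | var x => exact HasTy.var (S := SigLab S) x
  | app h1 h2 ih1 ih2 => exact .app ih1 ih2

theorem pat_label (i : ℕ) : ∀ p : Tm α,
    (PatSpine S p → PatSpine (SigLab S) (labelTm S i p)) ∧
    (Pat S p → Pat (SigLab S) (labelTm S i p)) := by
  intro p
  induction p with
  | sym f =>
    constructor
    · intro h
      cases h with
      | head hc => exact .head (show (SigLab S).Cons (f, _) from hc)
    · intro h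
      cases h with
      | cons hs hty =>
        cases hs with
        | head hc =>
          refine .cons (.head (show (SigLab S).Cons (f, _) from hc)) ?_
          obtain ⟨j, hj⟩ := hty
          exact ⟨j, hasTy_label i hj⟩
  | var y =>
    constructor
    · intro h; cases h
    · intro h
      cases h with
      | var => exact .var y
      | cons hs _ => cases hs
  | app a b iha ihb =>
    have hsp : PatSpine S (Tm.app a b) → PatSpine (SigLab S) (labelTm S i (Tm.app a b)) := by
      intro h
      cases h with
      | app hs hp => exact .app (iha.1 hs) (ihb.2 hp)
    refine ⟨hsp, ?_⟩
    intro h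
    cases h with
    | cons hs hty =>
      obtain ⟨j, hj⟩ := hty
      exact .cons (hsp hs) ⟨j, hasTy_label i hj⟩

theorem data_label (i : ℕ) {w : Tm α} (h : IsData S w) :
    IsData (SigLab S) (labelTm S i w) :=
  ⟨(pat_label i w).2 h.1, (ground_label i w).mpr h.2⟩

/-- Terms without defined symbols. -/
def NoDef (S : Sig α) : Tm α → Prop
  | .sym f => S.Cons f
  | .var _ => True
  | .app a b => NoDef S a ∧ NoDef S b

theorem pat_noDef : ∀ p : Tm α, (PatSpine S p → NoDef S p) ∧ (Pat S p → NoDef S p) := by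
  intro p
  induction p with
  | sym f =>
    constructor
    · intro h; cases h with | head hc => exact hc
    · intro h
      cases h with
      | cons hs _ => cases hs with | head hc => exact hc
  | var y =>
    constructor
    · intro h; cases h
    · intro _; trivial
  | app a b iha ihb =>
    have hsp : PatSpine S (Tm.app a b) → NoDef S (Tm.app a b) := by
      intro h
      cases h with
      | app hs hp => exact ⟨iha.1 hs, ihb.2 hp⟩
    refine ⟨hsp, ?_⟩
    intro h
    cases h with
    | cons hs _ => exact hsp hs

theorem noDef_subtm : ∀ (b : Tm α), NoDef S b → ∀ a, Subtm a b → NoDef S a := by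
  intro b
  induction b with
  | sym f => intro h a ha; rw [subtm_sym_inv ha]; exact h
  | var y => intro h a ha; rw [subtm_var_inv ha]; trivial
  | app s u ihs ihu =>
    intro h a ha
    cases ha with
    | refl => exact h
    | strict hstr =>
      cases hstr with
      | left h' => exact ihs h.1 a (.strict h')
      | right h' => exact ihu h.2 a h'

theorem label_eq_of_noDef {w : Tm α} (h : NoDef S w) (i j : ℕ) :
    labelTm S i w = labelTm S j w := by
  induction w with
  | sym f => simp [labelTm, show S.Cons f from h]
  | var y => rfl
  | app a b iha ihb => simp [labelTm, iha h.1, ihb h.2]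

theorem str_label (i : ℕ) : ∀ (b : Tm α) (a : Tm α),
    (StrSubtm a b → StrSubtm (labelTm S i a) (labelTm S i b)) ∧
    (Subtm a b → Subtm (labelTm S i a) (labelTm S i b)) := by
  intro b
  induction b with
  | sym f =>
    intro a
    constructor
    · intro h; cases h
    · intro h; rw [subtm_sym_inv h]; exact .refl _
  | var y =>
    intro a
    constructor
    · intro h; cases h
    · intro h; rw [subtm_var_inv h]; exact .refl _
  | app s u ihs ihu =>
    intro a
    have hstr : StrSubtm a (Tm.app s u) →
        StrSubtm (labelTm S i a) (labelTm S i (Tm.app s u)) := by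
      intro h
      cases h with
      | left h' => exact .left ((ihs a).1 h')
      | right h' => exact .right ((ihu a).2 h')
    constructor
    · exact hstr
    · intro h
      cases h with
      | refl => exact .refl _
      | strict h' => exact .strict (hstr h')

theorem subtm_label_inv (i : ℕ) : ∀ (r : Tm α) {w : Tm (α × ℕ)},
    Subtm w (labelTm S i r) → ∃ w₀, Subtm w₀ r ∧ w = labelTm S i w₀ := by
  intro r
  induction r with
  | sym f => intro w hw; exact ⟨.sym f, .refl _, subtm_sym_inv hw⟩
  | var y => intro w hw; exact ⟨.var y, .refl _, subtm_var_inv hw⟩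
  | app r₁ r₂ ih₁ ih₂ =>
    intro w hw
    cases hw with
    | refl => exact ⟨.app r₁ r₂, .refl _, rfl⟩
    | strict hstr =>
      cases hstr with
      | left h =>
        obtain ⟨w₀, hsub, rfl⟩ := ih₁ (.strict h)
        cases hsub with
        | refl => exact absurd h strSub_irrefl
        | strict h' => exact ⟨w₀, .strict (.left h'), rfl⟩
      | right h =>
        obtain ⟨w₀, hsub, rfl⟩ := ih₂ h
        exact ⟨w₀, .strict (.right hsub), rfl⟩

theorem lhsSpine_decomp : ∀ {l : Tm α}, LhsSpine S l →
    ∃ f ls, l = mkApp (.sym f) ls ∧ ¬ S.Cons f ∧ ∀ p ∈ ls, Pat S p := by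
  intro l h
  induction h with
  | head hnc => exact ⟨_, [], rfl, hnc, by simp⟩
  | app hs hp ih =>
    obtain ⟨f, ls, rfl, hnc, hps⟩ := ih
    refine ⟨f, ls ++ [_], by rw [mkApp_concat], hnc, ?_⟩
    intro p hp'
    rcases List.mem_append.mp hp' with h' | h'
    · exact hps p h'
    · simp at h'; subst h'; assumption

theorem niceR_RLab {R : Set (Rule α)} (hR : ∀ ρ ∈ R, GoodRule S ρ) :
    NiceR (SigLab S) (RLab S R) := by
  rintro ρ' hmem
  rcases hmem with ⟨f, i, hnc, rfl⟩ | ⟨ρ, hρ, i, rfl⟩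
  · refine ⟨⟨(f, i+1), [], rfl, hnc, by simp⟩, ?_, ?_, ?_⟩
    · intro x; simp [Tm.count]
    · intro x hx; simp [Tm.vars] at hx
    · intro w hw hch
      rw [subtm_sym_inv hw] at hch
      obtain ⟨c, hc, hcons⟩ := hch
      simp [Tm.headSym] at hc
      subst hc
      exact absurd hcons hnc
  · obtain ⟨hsp, hlin, hvars, -, hcf⟩ := hR ρ hρ
    obtain ⟨f, ls, hl, hnc, hpats⟩ := lhsSpine_decomp hsp
    refine ⟨⟨(f, i+1), ls.map (labelTm S (i+1)), ?_, hnc, ?_⟩, ?_, ?_, ?_⟩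
    · show labelTm S (i+1) ρ.lhs = _
      rw [hl, label_mkApp]
      congr 1
      simp [labelTm, if_neg hnc]
    · intro p hp
      obtain ⟨p₀, hp₀, rfl⟩ := List.mem_map.mp hp
      exact (pat_label (i+1) p₀).2 (hpats _ hp₀)
    · intro x
      show Tm.count x (labelTm S (i+1) ρ.lhs) ≤ 1
      rw [count_label]
      exact hlin x
    · show (labelTm S i ρ.rhs).vars ⊆ (labelTm S (i+1) ρ.lhs).vars
      rw [vars_label, vars_label]
      exact hvars
    · intro w hw hch
      obtain ⟨w₀, hsub, rfl⟩ := subtm_label_inv i ρ.rhs hw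
      have hch₀ : ConsHead S w₀ := consHead_label_inv hch
      rcases hcf w₀ hsub hch₀ with hdata | hstr
      · exact .inl (data_label i hdata)
      · refine .inr ?_
        have hnd : NoDef S w₀ := by
          have hstr' : StrSubtm w₀ (mkApp (.sym f) ls) := hl ▸ hstr
          rcases strSub_mkApp_inv hstr' with h | ⟨p, hp, hsub'⟩
          · cases h
          · exact noDef_subtm p ((pat_noDef p).2 (hpats p hp)) w₀ hsub'
        show StrSubtm (labelTm S i w₀) (labelTm S (i+1) ρ.lhs)
        rw [label_eq_of_noDef hnd i (i+1)]
        exact (str_label (i+1) ρ.lhs w₀).1 hstr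

end Labels

/-- In the labeled cons-free system, any reduction from a `B`-safe term to a
data term can be replaced by a semi-outermost reduction. -/
theorem semi_outermost_exists {α : Type} (S : Sig α) (R : Set (Rule α))
    (B : Set (Tm (α × ℕ)))
    (hR : ∀ ρ ∈ R, GoodRule S ρ)
    (hB : GoodB (SigLab S) (RLab S R) B)
    (s t : Tm (α × ℕ))
    (hs : BSafe (SigLab S) B s) (ht : IsData (SigLab S) t)
    (hst : Relation.ReflTransGen (Rew (RLab S R)) s t) :
    SemiOut (RLab S R) s t := by
  have hN : NiceR (SigLab S) (RLab S R) := niceR_RLab hR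
  have hOK : OKt (SigLab S) B s := BSafe_OKt hs
  clear hs
  revert hOK
  induction hst using Relation.ReflTransGen.head_induction_on with
  | refl => intro _; exact .refl _
  | head hab hbt ih =>
    intro hOK
    have hOKb := OKt_rew hN hB hab hOK
    obtain ⟨P⟩ := rew_parD hab
    exact prepend hN hB (ih hOKb) ht (mu P) P le_rfl hOK
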